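/- Let a, b, c, d ∈ ℂ be such that the closed segments [a,b] and [c,d] are disjoint. Then the iterated complex line integral ∫_{[a,b]} (∫_{[c,d]} (z−w)^{−2} dw) dz is well defined, and Re[ ∫_{[a,b]} ∫_{[c,d]} (z−w)^{−2} dw dz ] = log( |b−d| · |a−c| ) − log( |a−d| · |b−c| ). -/

import Mathlib

open scoped Real

/-- the complex line integral of `f` along the straight segment from `p` to `q` -/
noncomputable def segIntegral (f : ℂ → ℂ) (p q : ℂ) : ℂ :=
  ∫ t in (0:ℝ)..1, f (p + (t : ℂ) * (q - p)) * (q - p)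

lemma seg_mem (p q : ℂ) {t : ℝ} (ht : t ∈ Set.Icc (0:ℝ) 1) :
    p + (t : ℂ) * (q - p) ∈ segment ℝ p q := by
  rw [segment_eq_image']
  exact ⟨t, ht, by simp [Complex.real_smul]⟩

lemma hasDerivAt_gamma (p q : ℂ) (t : ℝ) :
    HasDerivAt (fun s : ℝ => p + (s : ℂ) * (q - p)) (q - p) t := by
  simpa using ((hasDerivAt_id t).ofReal_comp.mul_const (q - p)).const_add p

lemma inner_integral_eq (z c d : ℂ) (hz : z ∉ segment ℝ c d) :
    segIntegral (fun w => ((z - w)^2)⁻¹) c d = (z - d)⁻¹ - (z - c)⁻¹ := by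
  have hne : ∀ t ∈ Set.Icc (0:ℝ) 1, z - (c + (t : ℂ) * (d - c)) ≠ 0 := by
    intro t ht h
    apply hz
    have : z = c + (t : ℂ) * (d - c) := by linear_combination h
    rw [this]; exact seg_mem c d ht
  have hderiv : ∀ t ∈ Set.uIcc (0:ℝ) 1,
      HasDerivAt (fun s : ℝ => (z - (c + (s : ℂ) * (d - c)))⁻¹)
        (((z - (c + (t : ℂ) * (d - c)))^2)⁻¹ * (d - c)) t := by
    intro t ht
    rw [Set.uIcc_of_le (by norm_num : (0:ℝ) ≤ 1)] at ht
    have h1 : HasDerivAt (fun s : ℝ => z - (c + (s : ℂ) * (d - c))) (-(d - c)) t := by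
      simpa using (hasDerivAt_gamma c d t).const_sub z
    have h2 := HasDerivAt.scomp_of_eq t (hasDerivAt_inv (hne t ht)) h1 rfl
    have : HasDerivAt (fun s : ℝ => (z - (c + (s : ℂ) * (d - c)))⁻¹)
        ((-(d - c)) • (-((z - (c + (t : ℂ) * (d - c))) ^ 2)⁻¹)) t := h2
    convert this using 1
    simp [smul_eq_mul]
    ring
  have hcont : IntervalIntegrable
      (fun t : ℝ => ((z - (c + (t : ℂ) * (d - c)))^2)⁻¹ * (d - c)) MeasureTheory.volume 0 1 := by
    apply ContinuousOn.intervalIntegrable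
    rw [Set.uIcc_of_le (by norm_num : (0:ℝ) ≤ 1)]
    apply ContinuousOn.mul _ continuousOn_const
    apply ContinuousOn.inv₀
    · fun_prop
    · intro t ht
      exact pow_ne_zero 2 (hne t ht)
  have key := intervalIntegral.integral_eq_sub_of_hasDerivAt hderiv hcont
  unfold segIntegral
  rw [key]
  norm_num

lemma hasDerivAt_log_abs (a b p : ℂ) (t : ℝ) (h : a + (t : ℂ) * (b - a) - p ≠ 0) :
    HasDerivAt (fun s : ℝ => Real.log ‖a + (s : ℂ) * (b - a) - p‖)
      (((b - a) / (a + (t : ℂ) * (b - a) - p)).re) t := by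
  have hγd : HasDerivAt (fun s : ℝ => a + (s : ℂ) * (b - a) - p) (b - a) t :=
    (hasDerivAt_gamma a b t).sub_const p
  have hre : HasDerivAt (fun s : ℝ => (a + (s : ℂ) * (b - a) - p).re) ((b - a).re) t :=
    Complex.reCLM.hasFDerivAt.comp_hasDerivAt t hγd
  have him : HasDerivAt (fun s : ℝ => (a + (s : ℂ) * (b - a) - p).im) ((b - a).im) t :=
    Complex.imCLM.hasFDerivAt.comp_hasDerivAt t hγd
  have hu : HasDerivAt (fun s : ℝ => Complex.normSq (a + (s : ℂ) * (b - a) - p))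
      (2 * ((a + (t : ℂ) * (b - a) - p).re * (b - a).re
        + (a + (t : ℂ) * (b - a) - p).im * (b - a).im)) t := by
    have := (hre.mul hre).add (him.mul him)
    simp only [Complex.normSq_apply]
    refine this.congr_deriv ?_
    ring
  have hupos : Complex.normSq (a + (t : ℂ) * (b - a) - p) ≠ 0 := by
    simpa [Complex.normSq_eq_zero] using h
  have hlog := ((Real.hasDerivAt_log hupos).comp t hu).div_const 2
  have key : ((b - a) / (a + (t : ℂ) * (b - a) - p)).re
      = (Complex.normSq (a + (t : ℂ) * (b - a) - p))⁻¹
          * (2 * ((a + (t : ℂ) * (b - a) - p).re * (b - a).re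
            + (a + (t : ℂ) * (b - a) - p).im * (b - a).im)) / 2 := by
    rw [Complex.div_re]
    field_simp
  have heq : (fun s : ℝ => Real.log ‖a + (s : ℂ) * (b - a) - p‖)
      = fun s : ℝ => Real.log (Complex.normSq (a + (s : ℂ) * (b - a) - p)) / 2 := by
    funext s
    rw [Complex.norm_def, Real.log_sqrt (Complex.normSq_nonneg _)]
  rw [heq, key]
  exact hlog

/-- Cross-ratio formula: if the segments `[a,b]` and `[c,d]` are disjoint, then
`Re ∫_{[a,b]} ∫_{[c,d]} (z-w)⁻² dw dz = log(|b-d|·|a-c|) - log(|a-d|·|b-c|)`. -/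
theorem re_double_segment_integral_cross_ratio (a b c d : ℂ)
    (hdisj : Disjoint (segment ℝ a b) (segment ℝ c d)) :
    (segIntegral (fun z => segIntegral (fun w => ((z - w)^2)⁻¹) c d) a b).re
      = Real.log (‖b - d‖ * ‖a - c‖)
        - Real.log (‖a - d‖ * ‖b - c‖) := by
  have hnotcd : ∀ t ∈ Set.Icc (0:ℝ) 1, a + (t : ℂ) * (b - a) ∉ segment ℝ c d :=
    fun t ht => Set.disjoint_left.mp hdisj (seg_mem a b ht)
  have hne : ∀ p ∈ segment ℝ c d, ∀ t ∈ Set.Icc (0:ℝ) 1,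
      a + (t : ℂ) * (b - a) - p ≠ 0 := by
    intro p hp t ht h
    rw [sub_eq_zero] at h
    exact hnotcd t ht (h ▸ hp)
  have hned : ∀ t ∈ Set.Icc (0:ℝ) 1, a + (t : ℂ) * (b - a) - d ≠ 0 :=
    hne d (right_mem_segment ℝ c d)
  have hnec : ∀ t ∈ Set.Icc (0:ℝ) 1, a + (t : ℂ) * (b - a) - c ≠ 0 :=
    hne c (left_mem_segment ℝ c d)
  set f : ℝ → ℂ := fun t =>
      ((a + (t : ℂ) * (b - a) - d)⁻¹ - (a + (t : ℂ) * (b - a) - c)⁻¹) * (b - a) with hf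
  have hcongr : segIntegral (fun z => segIntegral (fun w => ((z - w)^2)⁻¹) c d) a b
      = ∫ t in (0:ℝ)..1, f t := by
    rw [segIntegral]
    apply intervalIntegral.integral_congr
    intro t ht
    rw [Set.uIcc_of_le (by norm_num : (0:ℝ) ≤ 1)] at ht
    simp only [hf]
    rw [inner_integral_eq _ _ _ (hnotcd t ht)]
  rw [hcongr]
  have hcont : ContinuousOn f (Set.Icc (0:ℝ) 1) := by
    apply ContinuousOn.mul _ continuousOn_const
    exact ContinuousOn.sub (ContinuousOn.inv₀ (by fun_prop) hned)
      (ContinuousOn.inv₀ (by fun_prop) hnec)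
  have hint : IntervalIntegrable f MeasureTheory.volume 0 1 := by
    apply ContinuousOn.intervalIntegrable
    rwa [Set.uIcc_of_le (by norm_num : (0:ℝ) ≤ 1)]
  have hre : (∫ t in (0:ℝ)..1, f t).re = ∫ t in (0:ℝ)..1, (f t).re :=
    (Complex.reCLM.intervalIntegral_comp_comm hint).symm
  rw [hre]
  have hintre : IntervalIntegrable (fun t => (f t).re) MeasureTheory.volume 0 1 := by
    apply ContinuousOn.intervalIntegrable
    rw [Set.uIcc_of_le (by norm_num : (0:ℝ) ≤ 1)]
    exact Complex.continuous_re.comp_continuousOn hcont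
  set F : ℝ → ℝ := fun t => Real.log ‖a + (t : ℂ) * (b - a) - d‖
      - Real.log ‖a + (t : ℂ) * (b - a) - c‖ with hF
  have hderiv : ∀ t ∈ Set.uIcc (0:ℝ) 1, HasDerivAt F ((f t).re) t := by
    intro t ht
    rw [Set.uIcc_of_le (by norm_num : (0:ℝ) ≤ 1)] at ht
    have h1 := (hasDerivAt_log_abs a b d t (hned t ht)).sub
      (hasDerivAt_log_abs a b c t (hnec t ht))
    have hfeq : f t = (b - a) / (a + (t : ℂ) * (b - a) - d)
        - (b - a) / (a + (t : ℂ) * (b - a) - c) := by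
      simp only [hf]
      rw [div_eq_mul_inv, div_eq_mul_inv]
      ring
    rw [hfeq, Complex.sub_re]
    exact h1
  rw [intervalIntegral.integral_eq_sub_of_hasDerivAt hderiv hintre]
  have hbd : b - d ≠ 0 := by
    have := hned 1 (by norm_num)
    intro h; apply this; push_cast; linear_combination h
  have hbc : b - c ≠ 0 := by
    have := hnec 1 (by norm_num)
    intro h; apply this; push_cast; linear_combination h
  have had : a - d ≠ 0 := by
    have := hned 0 (by norm_num)
    intro h; apply this; push_cast; linear_combination h
  have hac : a - c ≠ 0 := by
    have := hnec 0 (by norm_num)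
    intro h; apply this; push_cast; linear_combination h
  have e1 : a + ((1:ℝ) : ℂ) * (b - a) = b := by push_cast; ring
  have e0 : a + ((0:ℝ) : ℂ) * (b - a) = a := by push_cast; ring
  simp only [hF, e1, e0]
  rw [Real.log_mul (norm_ne_zero_iff.mpr hbd) (norm_ne_zero_iff.mpr hac),
    Real.log_mul (norm_ne_zero_iff.mpr had) (norm_ne_zero_iff.mpr hbc)]
  ring
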